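/- For every constant c > 0, the function g(t) = 2^{ct}/t is strictly convex on (0, ∞), and the minimum over positive integers t of g(t) is attained at t = ⌈1/(2^c − 1)⌉. -/

import Mathlib

open Real

private lemma hasDerivAt_aux (a : ℝ) {t : ℝ} (ht : t ≠ 0) :
    HasDerivAt (fun t : ℝ => exp (a * t) / t)
      ((a * exp (a * t) * t - exp (a * t) * 1) / t ^ 2) t := by
  have h1 : HasDerivAt (fun t : ℝ => exp (a * t)) (a * exp (a * t)) t := by
    have := (hasDerivAt_id t).const_mul a
    have h := (Real.hasDerivAt_exp (a * t)).comp t this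
    refine h.congr_deriv ?_
    ring
  exact h1.div (hasDerivAt_id t) ht

private lemma hasDerivAt_aux2 (a : ℝ) {t : ℝ} (ht : t ≠ 0) :
    HasDerivAt (fun t : ℝ => (a * exp (a * t) * t - exp (a * t) * 1) / t ^ 2)
      (exp (a * t) * (a ^ 2 * t ^ 2 - 2 * a * t + 2) / t ^ 3) t := by
  have hexp : HasDerivAt (fun t : ℝ => exp (a * t)) (a * exp (a * t)) t := by
    have := (hasDerivAt_id t).const_mul a
    have h := (Real.hasDerivAt_exp (a * t)).comp t this
    refine h.congr_deriv ?_
    ring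
  have hnum : HasDerivAt (fun t : ℝ => a * exp (a * t) * t - exp (a * t) * 1)
      ((a * (a * exp (a * t))) * t + a * exp (a * t) * 1 - a * exp (a * t) * 1) t := by
    have h1 := ((hexp.const_mul a).mul (hasDerivAt_id t))
    have h2 := hexp.mul_const (1 : ℝ)
    refine (h1.sub h2).congr_deriv ?_
    simp only [id_eq]
  have hden : HasDerivAt (fun t : ℝ => t ^ 2) (2 * t) t := by
    simpa using hasDerivAt_pow 2 t
  have ht2 : t ^ 2 ≠ 0 := pow_ne_zero 2 ht
  have := hnum.div hden ht2
  refine this.congr_deriv ?_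
  field_simp
  ring

theorem stmt_14 (c : ℝ) (hc : 0 < c) :
    StrictConvexOn ℝ (Set.Ioi (0 : ℝ)) (fun t : ℝ => (2 : ℝ) ^ (c * t) / t) ∧
    ∀ m : ℕ, 0 < m →
      (2 : ℝ) ^ (c * (⌈1 / ((2 : ℝ) ^ c - 1)⌉₊ : ℝ)) /
          (⌈1 / ((2 : ℝ) ^ c - 1)⌉₊ : ℝ) ≤
        (2 : ℝ) ^ (c * (m : ℝ)) / (m : ℝ) := by
  set a : ℝ := c * Real.log 2 with ha_def
  have ha : 0 < a := mul_pos hc (Real.log_pos one_lt_two)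
  have hrw : ∀ t : ℝ, (2 : ℝ) ^ (c * t) = exp (a * t) := by
    intro t
    rw [Real.rpow_def_of_pos two_pos, ha_def]
    ring_nf
  constructor
  · have hfun : (fun t : ℝ => (2 : ℝ) ^ (c * t) / t) = fun t : ℝ => exp (a * t) / t := by
      funext t; rw [hrw]
    rw [hfun]
    apply strictConvexOn_of_deriv2_pos (convex_Ioi 0)
    · apply ContinuousOn.div
      · exact (Real.continuous_exp.comp (continuous_const.mul continuous_id)).continuousOn
      · exact continuousOn_id
      · intro x hx; exact ne_of_gt hx
    · intro x hx
      rw [interior_Ioi] at hx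
      have hx0 : x ≠ 0 := ne_of_gt hx
      have hderiv1 : deriv (fun t : ℝ => exp (a * t) / t)
          =ᶠ[nhds x] fun t => (a * exp (a * t) * t - exp (a * t) * 1) / t ^ 2 := by
        filter_upwards [eventually_ne_nhds hx0] with t ht
        exact (hasDerivAt_aux a ht).deriv
      have : deriv^[2] (fun t : ℝ => exp (a * t) / t) x
          = exp (a * x) * (a ^ 2 * x ^ 2 - 2 * a * x + 2) / x ^ 3 := by
        simp only [Function.iterate_succ, Function.iterate_zero, Function.comp_apply, id]
        rw [Filter.EventuallyEq.deriv_eq hderiv1]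
        exact (hasDerivAt_aux2 a hx0).deriv
      rw [this]
      have hq : 0 < a ^ 2 * x ^ 2 - 2 * a * x + 2 := by nlinarith [sq_nonneg (a * x - 1)]
      exact div_pos (mul_pos (Real.exp_pos _) hq) (pow_pos hx 3)
  · -- discrete part
    have h2c : (1 : ℝ) < (2 : ℝ) ^ c :=
      Real.one_lt_rpow_iff_of_pos two_pos |>.mpr (Or.inl ⟨one_lt_two, hc⟩)
    have hsub : (0 : ℝ) < (2 : ℝ) ^ c - 1 := by linarith
    set x : ℝ := 1 / ((2 : ℝ) ^ c - 1) with hx_def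
    have hx0 : 0 < x := by positivity
    set τ : ℕ := ⌈x⌉₊ with hτ_def
    have hτpos : 0 < τ := Nat.ceil_pos.mpr hx0
    set g : ℕ → ℝ := fun n => (2 : ℝ) ^ (c * (n : ℝ)) / (n : ℝ) with hg_def
    have hgpos : ∀ n : ℕ, 0 < n → 0 < g n := by
      intro n hn
      have : (0 : ℝ) < (n : ℝ) := Nat.cast_pos.mpr hn
      have h2 : (0 : ℝ) < (2 : ℝ) ^ (c * (n : ℝ)) := Real.rpow_pos_of_pos two_pos _
      exact div_pos h2 this
    have hstep : ∀ n : ℕ, 0 < n →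
        (g (n + 1) ≤ g n ↔ (n : ℝ) * ((2 : ℝ) ^ c - 1) ≤ 1) := by
      intro n hn
      have hnR : (0 : ℝ) < (n : ℝ) := Nat.cast_pos.mpr hn
      have hn1R : (0 : ℝ) < ((n : ℝ) + 1) := by linarith
      have hcast : ((n + 1 : ℕ) : ℝ) = (n : ℝ) + 1 := by push_cast; ring
      have hp : (0 : ℝ) < (2 : ℝ) ^ (c * (n : ℝ)) := Real.rpow_pos_of_pos two_pos _
      have hsplit : (2 : ℝ) ^ (c * ((n : ℝ) + 1)) = (2 : ℝ) ^ (c * (n : ℝ)) * (2 : ℝ) ^ c := by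
        rw [← Real.rpow_add two_pos]; ring_nf
      simp only [hg_def, hcast, hsplit]
      rw [div_le_div_iff₀ hn1R hnR]
      constructor
      · intro h; nlinarith
      · intro h; nlinarith
    have hstep' : ∀ n : ℕ, 0 < n →
        (g n ≤ g (n + 1) ↔ 1 ≤ (n : ℝ) * ((2 : ℝ) ^ c - 1)) := by
      intro n hn
      have hnR : (0 : ℝ) < (n : ℝ) := Nat.cast_pos.mpr hn
      have hn1R : (0 : ℝ) < ((n : ℝ) + 1) := by linarith
      have hcast : ((n + 1 : ℕ) : ℝ) = (n : ℝ) + 1 := by push_cast; ring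
      have hp : (0 : ℝ) < (2 : ℝ) ^ (c * (n : ℝ)) := Real.rpow_pos_of_pos two_pos _
      have hsplit : (2 : ℝ) ^ (c * ((n : ℝ) + 1)) = (2 : ℝ) ^ (c * (n : ℝ)) * (2 : ℝ) ^ c := by
        rw [← Real.rpow_add two_pos]; ring_nf
      simp only [hg_def, hcast, hsplit]
      rw [div_le_div_iff₀ hnR hn1R]
      constructor
      · intro h; nlinarith
      · intro h; nlinarith
    -- upward
    have hup : ∀ k : ℕ, g τ ≤ g (τ + k) := by
      intro k
      induction k with
      | zero => simp
      | succ k ih =>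
        have hpos : 0 < τ + k := Nat.lt_of_lt_of_le hτpos (Nat.le_add_right _ _)
        have hτx : x ≤ (τ : ℝ) := Nat.le_ceil x
        have hxn : x ≤ ((τ + k : ℕ) : ℝ) := by
          push_cast
          have : (τ : ℝ) ≤ (τ : ℝ) + (k : ℝ) := le_add_of_nonneg_right (Nat.cast_nonneg k)
          linarith
        have h1 : 1 ≤ ((τ + k : ℕ) : ℝ) * ((2 : ℝ) ^ c - 1) := by
          rw [hx_def] at hxn
          rw [div_le_iff₀ hsub] at hxn
          linarith
        have := (hstep' (τ + k) hpos).mpr h1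
        calc g τ ≤ g (τ + k) := ih
          _ ≤ g (τ + k + 1) := this
    -- downward
    have hdown : ∀ j : ℕ, ∀ n : ℕ, 0 < n → n + j = τ → g τ ≤ g n := by
      intro j
      induction j with
      | zero => intro n _ h; simp at h; rw [h]
      | succ j ih =>
        intro n hn h
        have hlt : n < τ := by omega
        have hnx : (n : ℝ) < x := Nat.lt_ceil.mp hlt
        have h1 : (n : ℝ) * ((2 : ℝ) ^ c - 1) ≤ 1 := by
          rw [hx_def] at hnx
          rw [lt_div_iff₀ hsub] at hnx
          linarith
        have hs := (hstep n hn).mpr h1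
        have := ih (n + 1) (Nat.succ_pos n) (by omega)
        linarith
    intro m hm
    show g τ ≤ g m
    rcases le_or_gt m τ with h | h
    · exact hdown (τ - m) m hm (by omega)
    · have := hup (m - τ)
      have heq : τ + (m - τ) = m := by omega
      rwa [heq] at this
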